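/- If a finite group G acts by isometries on a nonempty proper metric space X, then the quotient map X → G\X (where G\X carries the Hausdorff distance between orbits) is coarsely open. -/

import Mathlib

open Metric Bornology Function Set

/-- A map between metric spaces is (coarsely) proper if preimages of bounded
sets are bounded. -/
def MetricallyProper {X Y : Type*} [MetricSpace X] [MetricSpace Y] (f : X → Y) : Prop :=
  ∀ B : Set Y, IsBounded B → IsBounded (f ⁻¹' B)

/-- A coarse map: proper, and uniformly bornologous. -/
def CoarseMap {X Y : Type*} [MetricSpace X] [MetricSpace Y] (f : X → Y) : Prop :=
  MetricallyProper f ∧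
    ∀ R > (0:ℝ), ∃ S > (0:ℝ), ∀ x x' : X, dist x x' ≤ R → dist (f x) (f x') ≤ S

/-- Coarsely surjective map. -/
def CoarselySurjective {X Y : Type*} [MetricSpace X] [MetricSpace Y] (f : X → Y) : Prop :=
  ∃ R > (0:ℝ), ∀ y : Y, ∃ x : X, dist y (f x) ≤ R

/-- `f` is coarsely `n`-to-1. -/
def CoarselyNTo1 {X Y : Type*} [MetricSpace X] [MetricSpace Y] (f : X → Y) (n : ℕ) : Prop :=
  ∀ R > (0:ℝ), ∃ S > (0:ℝ), ∀ A : Set Y, (∀ y ∈ A, ∀ y' ∈ A, dist y y' ≤ R) →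
    ∃ V : Fin n → Set X, (∀ i, ∀ x ∈ V i, ∀ x' ∈ V i, dist x x' ≤ S) ∧ f ⁻¹' A ⊆ ⋃ i, V i

/-- `f` is coarsely finite-to-1. -/
def CoarselyFiniteTo1 {X Y : Type*} [MetricSpace X] [MetricSpace Y] (f : X → Y) : Prop :=
  ∀ R > (0:ℝ), ∃ S > (0:ℝ), ∃ m : ℕ, ∀ A : Set Y, (∀ y ∈ A, ∀ y' ∈ A, dist y y' ≤ R) →
    ∃ V : Fin m → Set X, (∀ i, ∀ x ∈ V i, ∀ x' ∈ V i, dist x x' ≤ S) ∧ f ⁻¹' A ⊆ ⋃ i, V i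

/-- Two maps are close. -/
def Close {X Y : Type*} [MetricSpace X] [MetricSpace Y] (f g : X → Y) : Prop :=
  ∃ R > (0:ℝ), ∀ x : X, dist (f x) (g x) ≤ R

/-- `f` is a coarse equivalence. -/
def CoarseEquivalence {X Y : Type*} [MetricSpace X] [MetricSpace Y] (f : X → Y) : Prop :=
  CoarseMap f ∧ ∃ g : Y → X, CoarseMap g ∧ Close (f ∘ g) id ∧ Close (g ∘ f) id

/-- `X` and `Y` are coarsely equivalent. -/
def CoarselyEquivalent (X Y : Type*) [MetricSpace X] [MetricSpace Y] : Prop :=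
  ∃ f : X → Y, CoarseEquivalence f

/-- A family of subsets is uniformly bounded. -/
def UnifBounded {X : Type*} [MetricSpace X] (𝒰 : Set (Set X)) : Prop :=
  ∃ S : ℝ, ∀ U ∈ 𝒰, ∀ x ∈ U, ∀ y ∈ U, dist x y ≤ S

/-- A family of subsets is `R`-disjoint: distinct members lie at distance `> R`. -/
def RDisjointFam {X : Type*} [MetricSpace X] (𝒰 : Set (Set X)) (R : ℝ) : Prop :=
  ∀ U ∈ 𝒰, ∀ V ∈ 𝒰, U ≠ V → ∀ x ∈ U, ∀ y ∈ V, R < dist x y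

/-- `asdim X ≤ n`. -/
def ASDimLE (X : Type*) [MetricSpace X] (n : ℕ) : Prop :=
  ∀ R > (0:ℝ), ∃ 𝒰 : Fin (n + 1) → Set (Set X),
    (∀ i, UnifBounded (𝒰 i)) ∧ (∀ i, RDisjointFam (𝒰 i) R) ∧
      ∀ x : X, ∃ i, ∃ U ∈ 𝒰 i, x ∈ U

/-- The asymptotic dimension of `X`, valued in `ℕ∞`. -/
noncomputable def asdim (X : Type*) [MetricSpace X] : ℕ∞ :=
  sInf {n : ℕ∞ | ∃ m : ℕ, n = (m : ℕ∞) ∧ ASDimLE X m}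

/-- TI-increasing functions `[0,∞) → [0,∞)`. -/
def TIIncreasing (ρ : NNReal → NNReal) : Prop :=
  Monotone ρ ∧ Filter.Tendsto ρ Filter.atTop Filter.atTop

/-- The variable-radius neighborhood `N(A, ρ)` with respect to a basepoint `x₀`. -/
def GrowNbhd {X : Type*} [MetricSpace X] (x₀ : X) (A : Set X) (ρ : NNReal → NNReal) : Set X :=
  {x' | ∃ x ∈ A, nndist x' x ≤ ρ (nndist x x₀)}

/-- `f` is coarsely open (with respect to basepoints `x₀`, `y₀`). -/
def CoarselyOpen {X Y : Type*} [MetricSpace X] [MetricSpace Y] (f : X → Y)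
    (x₀ : X) (y₀ : Y) : Prop :=
  ∀ A : Set X, ¬ IsBounded A → ∀ ρ : NNReal → NNReal, TIIncreasing ρ →
    ∃ ρ' : NNReal → NNReal, TIIncreasing ρ' ∧
      GrowNbhd y₀ (f '' A) ρ' ⊆ f '' GrowNbhd x₀ A ρ

/-- `N(A, R)`, the closed `R`-neighborhood of `A`. -/
def NbhdR {X : Type*} [MetricSpace X] (A : Set X) (R : ℝ) : Set X :=
  {x | ∃ a ∈ A, dist x a ≤ R}

/-- A finite collection of subsets is gradually disjoint. -/
def GraduallyDisjoint {X : Type*} [MetricSpace X] {k : ℕ} (A : Fin k → Set X) : Prop :=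
  ∀ R > (0:ℝ), ∃ B : Set X, IsBounded B ∧
    ∀ i j, i ≠ j → Disjoint (NbhdR (A i) R \ B) (NbhdR (A j) R \ B)

/-- A finite collection of subsets diverges. -/
def Diverges {X : Type*} [MetricSpace X] {k : ℕ} (A : Fin k → Set X) : Prop :=
  ∀ R > (0:ℝ), IsBounded (⋂ i, NbhdR (A i) R)

/-- A countable collection of subsets is gradually disjoint: every finite
subcollection is. -/
def GraduallyDisjointSeq {X : Type*} [MetricSpace X] (A : ℕ → Set X) : Prop :=
  ∀ s : Finset ℕ, ∀ R > (0:ℝ), ∃ B : Set X, IsBounded B ∧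
    ∀ i ∈ s, ∀ j ∈ s, i ≠ j → Disjoint (NbhdR (A i) R \ B) (NbhdR (A j) R \ B)

/-- A countable collection of subsets diverges: some finite subcollection diverges. -/
def DivergesSeq {X : Type*} [MetricSpace X] (A : ℕ → Set X) : Prop :=
  ∃ s : Finset ℕ, ∀ R > (0:ℝ), IsBounded (⋂ i ∈ s, NbhdR (A i) R)

/-- A complex-valued function on a metric space is slowly oscillating. -/
def SlowlyOscillating {X : Type*} [MetricSpace X] (φ : X → ℂ) : Prop :=
  ∀ R > (0:ℝ), ∀ ε > (0:ℝ), ∃ A : Set X, IsBounded A ∧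
    ∀ x : X, ∀ p ∈ closedBall x R \ A, ∀ p' ∈ closedBall x R \ A, dist (φ p) (φ p') ≤ ε

/-- If a finite group `G` acts by isometries on a nonempty
proper metric space `X`, then the quotient map `X → G\X` (to the orbit space
with the Hausdorff distance between orbits) is coarsely open. -/
theorem quotientMap_coarselyOpen {X : Type*} [MetricSpace X] [ProperSpace X] [Nonempty X]
    (G : Type*) [Group G] [Finite G] [MulAction G X]
    (hiso : ∀ g : G, Isometry fun x : X => g • x)
    (Q : Type*) [MetricSpace Q] (q : X → Q)
    (hsurj : Function.Surjective q)
    (hq : ∀ x y : X, q x = q y ↔ MulAction.orbit G x = MulAction.orbit G y)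
    (hdist : ∀ x y : X,
      dist (q x) (q y) = hausdorffDist (MulAction.orbit G x) (MulAction.orbit G y)) :
    ∀ (x₀ : X) (y₀ : Q), CoarselyOpen q x₀ y₀ := by
  intro x₀ y₀ A _hA ρ hρ
  obtain ⟨x₁, hx₁⟩ := hsurj y₀
  set c : NNReal := nndist x₀ x₁ with hc
  refine ⟨fun t => ρ (t - c), ⟨fun s t hst => hρ.1 (tsub_le_tsub_right hst c), ?_⟩, ?_⟩
  · exact hρ.2.comp (Filter.tendsto_atTop_atTop.2 fun b =>
      ⟨b + c, fun a ha => le_tsub_of_add_le_right ha⟩)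
  · rintro y' ⟨b, ⟨a, haA, rfl⟩, hy'⟩
    obtain ⟨x'', rfl⟩ := hsurj y'
    have horbfin : ∀ z : X, (MulAction.orbit G z).Finite := fun z => Set.finite_range _
    have hne : ∀ z : X, (MulAction.orbit G z).Nonempty := fun z => ⟨z, MulAction.mem_orbit_self z⟩
    have hedist : EMetric.hausdorffEdist (MulAction.orbit G a) (MulAction.orbit G x'') ≠ ⊤ :=
      Metric.hausdorffEdist_ne_top_of_nonempty_of_bounded (hne a) (hne x'')
        (horbfin a).isBounded (horbfin x'').isBounded
    obtain ⟨z, hz, hinf⟩ := ((horbfin x'').isCompact).exists_infDist_eq_dist (hne x'') a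
    have h1 : dist a z ≤ dist (q x'') (q a) := by
      rw [hdist, Metric.hausdorffDist_comm, ← hinf]
      exact Metric.infDist_le_hausdorffDist_of_mem (MulAction.mem_orbit_self a) hedist
    have hqz : q z = q x'' := by
      rw [hq]
      obtain ⟨g, rfl⟩ := hz
      exact MulAction.orbit_smul g x''
    have h2 : dist (q a) y₀ ≤ dist a x₀ + dist x₀ x₁ := by
      rw [← hx₁, hdist]
      have hle : Metric.hausdorffDist (MulAction.orbit G a) (MulAction.orbit G x₁)
          ≤ dist a x₁ := by
        apply Metric.hausdorffDist_le_of_mem_dist dist_nonneg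
        · rintro _ ⟨g, rfl⟩
          exact ⟨g • x₁, ⟨g, rfl⟩, le_of_eq ((hiso g).dist_eq a x₁)⟩
        · rintro _ ⟨g, rfl⟩
          exact ⟨g • a, ⟨g, rfl⟩, by rw [dist_comm]; exact ((hiso g).dist_eq a x₁).le⟩
      exact hle.trans (dist_triangle a x₀ x₁)
    refine ⟨z, ⟨a, haA, ?_⟩, hqz⟩
    have key : nndist (q a) y₀ - c ≤ nndist a x₀ := by
      rw [tsub_le_iff_right, ← NNReal.coe_le_coe]
      push_cast
      simpa [hc, ← dist_nndist] using h2
    have hz2 : nndist z a ≤ ρ (nndist (q a) y₀ - c) := by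
      calc nndist z a ≤ nndist (q x'') (q a) := by
            rw [← NNReal.coe_le_coe]
            simpa [← dist_nndist, nndist_comm z a] using h1
        _ ≤ _ := hy'
    exact hz2.trans (hρ.1 key)
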